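/- arXiv:2404.13839 — 8 statements merged into one kernel-verified Lean document; each statement's English description precedes it below -/
import Mathlib

section
/- Let n be an odd positive integer, let E be a finite set with |E| = n, and let Dⁿ = (E, 𝓕) where 𝓕 consists of all subsets of E of even cardinality. Then for every A ⊆ E one has w(Dⁿ ⋆ A) = n − 1; consequently the twist polynomial ∑_{A ⊆ E} z^{w(Dⁿ ⋆ A)} is the single-term polynomial 2ⁿ · z^{n−1}. -/
open Finset
open scoped symmDiff

/-- A delta-matroid on ground set `E`: a nonempty collection `𝓕` of subsets of `E`
(the feasible sets) satisfying the Symmetric Exchange Axiom. -/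
def IsDeltaMatroid {α : Type*} [DecidableEq α] (E : Finset α) (𝓕 : Set (Finset α)) : Prop :=
  𝓕.Nonempty ∧ (∀ F ∈ 𝓕, F ⊆ E) ∧
    ∀ F₁ ∈ 𝓕, ∀ F₂ ∈ 𝓕, ∀ x ∈ F₁ ∆ F₂,
      ∃ y ∈ F₁ ∆ F₂, F₁ ∆ ({x, y} : Finset α) ∈ 𝓕

/-- The twist `D ⋆ A` of a set system: feasible sets are `A ∆ F` for `F` feasible. -/
def twist {α : Type*} [DecidableEq α] (𝓕 : Set (Finset α)) (A : Finset α) : Set (Finset α) :=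
  (fun F => A ∆ F) '' 𝓕

/-- Width: maximum feasible cardinality minus minimum feasible cardinality. -/
noncomputable def width {α : Type*} (𝓕 : Set (Finset α)) : ℕ :=
  sSup (Finset.card '' 𝓕) - sInf (Finset.card '' 𝓕)

/-- The deletion `D ∖ e`: feasible sets of `D` avoiding `e` (ground set `E \ {e}`). -/
def deleteSys {α : Type*} (𝓕 : Set (Finset α)) (e : α) : Set (Finset α) :=
  {F ∈ 𝓕 | e ∉ F}

/-- The contraction `D / e`: subsets `F` of `E \ {e}` with `F ∪ {e}` feasible in `D`. -/
def contractSys {α : Type*} [DecidableEq α] (E : Finset α) (𝓕 : Set (Finset α)) (e : α) :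
    Set (Finset α) :=
  {F | F ⊆ E.erase e ∧ F ∪ {e} ∈ 𝓕}

/-- A set system is even if any two feasible sets have symmetric difference of even size. -/
def IsEvenSys {α : Type*} [DecidableEq α] (𝓕 : Set (Finset α)) : Prop :=
  ∀ F₁ ∈ 𝓕, ∀ F₂ ∈ 𝓕, Even (F₁ ∆ F₂).card

/-- The set system `(E, 𝓕)` contains an S-pattern at `F` with witnesses `x₁ x₂ y₁ y₂`. -/
def SPatternAt {α : Type*} [DecidableEq α] (E : Finset α) (𝓕 : Set (Finset α))
    (F : Finset α) (x₁ x₂ y₁ y₂ : α) : Prop :=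
  F ∈ 𝓕 ∧ x₁ ∈ F ∧ x₂ ∈ F ∧ x₁ ≠ x₂ ∧
    y₁ ∈ E \ F ∧ y₂ ∈ E \ F ∧ y₁ ≠ y₂ ∧
    F ∆ ({x₁, y₁} : Finset α) ∈ 𝓕 ∧ F ∆ ({x₂, y₂} : Finset α) ∈ 𝓕 ∧
    F ∆ ({x₁, y₂} : Finset α) ∈ 𝓕 ∧ F ∆ ({x₂, y₁} : Finset α) ∈ 𝓕 ∧
    F ∆ ({x₁, y₁} : Finset α) ∆ ({x₂, y₂} : Finset α) ∈ 𝓕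

lemma even_card_symmDiff_iff {α : Type*} [DecidableEq α] (s t : Finset α) :
    Even (s ∆ t).card ↔ (Even s.card ↔ Even t.card) := by
  have h1 : (s ∆ t).card = (s \ t).card + (t \ s).card := by
    rw [symmDiff_def, Finset.sup_eq_union, Finset.card_union_of_disjoint disjoint_sdiff_sdiff]
  have h2 : (s \ t).card + (s ∩ t).card = s.card := Finset.card_sdiff_add_card_inter s t
  have h3 : (t \ s).card + (t ∩ s).card = t.card := Finset.card_sdiff_add_card_inter t s
  have h4 : (s ∩ t).card = (t ∩ s).card := by rw [Finset.inter_comm]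
  simp only [Nat.even_iff] at *
  omega


lemma symmDiff_subset_union' {α : Type*} [DecidableEq α] (s t : Finset α) :
    s ∆ t ⊆ s ∪ t := by
  rw [symmDiff_def, Finset.sup_eq_union]
  exact Finset.union_subset ((Finset.sdiff_subset).trans Finset.subset_union_left)
    ((Finset.sdiff_subset).trans Finset.subset_union_right)

lemma card_image_twist {α : Type*} [DecidableEq α] (E A : Finset α) (hA : A ⊆ E) :
    Finset.card '' twist {F : Finset α | F ⊆ E ∧ Even F.card} A
      = {k | k ≤ E.card ∧ (Even k ↔ Even A.card)} := by
  ext k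
  constructor
  · rintro ⟨F', ⟨F, ⟨hFE, hFeven⟩, rfl⟩, rfl⟩
    have hsub : A ∆ F ⊆ E := (symmDiff_subset_union' A F).trans (Finset.union_subset hA hFE)
    refine ⟨Finset.card_le_card hsub, ?_⟩
    rw [even_card_symmDiff_iff]
    constructor
    · intro h; exact h.mpr hFeven
    · intro h; exact iff_of_true h hFeven
  · rintro ⟨hk, hpar⟩
    obtain ⟨G, hGE, hGcard⟩ := Finset.exists_subset_card_eq hk
    refine ⟨A ∆ (A ∆ G), ⟨A ∆ G, ⟨?_, ?_⟩, rfl⟩, ?_⟩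
    · exact (symmDiff_subset_union' A G).trans (Finset.union_subset hA hGE)
    · rw [even_card_symmDiff_iff, hGcard]
      exact hpar.symm
    · rw [symmDiff_symmDiff_cancel_left, hGcard]

lemma width_twist {α : Type*} [DecidableEq α] (n : ℕ) (hn : Odd n) (hpos : 0 < n)
    (E : Finset α) (hE : E.card = n) (A : Finset α) (hA : A ⊆ E) :
    width (twist {F : Finset α | F ⊆ E ∧ Even F.card} A) = n - 1 := by
  unfold width
  rw [card_image_twist E A hA, hE]
  have hn2 : n % 2 = 1 := Nat.odd_iff.mp hn
  rcases Nat.even_or_odd A.card with hAc | hAc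
  · -- even: set = even k ≤ n; sup = n-1, inf = 0
    have hset : {k | k ≤ n ∧ (Even k ↔ Even A.card)} = {k | k ≤ n ∧ Even k} := by
      ext k; simp [hAc]
    rw [hset]
    have hsup : sSup {k | k ≤ n ∧ Even k} = n - 1 := by
      apply le_antisymm
      · apply csSup_le ⟨0, by simp⟩
        rintro k ⟨hk1, hk2⟩
        rw [Nat.even_iff] at hk2; omega
      · apply le_csSup ⟨n, fun k hk => hk.1⟩
        refine ⟨by omega, ?_⟩
        rw [Nat.even_iff]; omega
    have hinf : sInf {k | k ≤ n ∧ Even k} = 0 :=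
      Nat.sInf_eq_zero.mpr (Or.inl ⟨by omega, Even.zero⟩)
    rw [hsup, hinf]
    omega
  · have hset : {k | k ≤ n ∧ (Even k ↔ Even A.card)} = {k | k ≤ n ∧ ¬ Even k} := by
      ext k; simp [Nat.not_even_iff_odd.mpr hAc]
    rw [hset]
    have hsup : sSup {k | k ≤ n ∧ ¬ Even k} = n := by
      apply le_antisymm
      · exact csSup_le ⟨n, ⟨le_rfl, by rw [Nat.even_iff]; omega⟩⟩ (fun k hk => hk.1)
      · exact le_csSup ⟨n, fun k hk => hk.1⟩ ⟨le_rfl, by rw [Nat.even_iff]; omega⟩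
    have hinf : sInf {k | k ≤ n ∧ ¬ Even k} = 1 := by
      apply le_antisymm
      · exact Nat.sInf_le ⟨hpos, by rw [Nat.even_iff]; omega⟩
      · have h1 : (1:ℕ) ∈ {k | k ≤ n ∧ ¬ Even k} := ⟨hpos, by rw [Nat.even_iff]; omega⟩
        refine le_csInf ⟨1, h1⟩ (fun k hk => ?_)
        have hk2 := hk.2
        rw [Nat.even_iff] at hk2; omega
    rw [hsup, hinf]

/-- For `Dⁿ` the delta-matroid of even-cardinality subsets of an `n`-element
set (`n` odd, positive), every twist has width `n - 1`, and hence the twist polynomial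
`∑_{A ⊆ E} z^{w(Dⁿ ⋆ A)}` equals `2ⁿ · z^(n-1)`. -/
theorem twist_polynomial_even_sets {α : Type*} [DecidableEq α] (n : ℕ) (hn : Odd n)
    (hpos : 0 < n) (E : Finset α) (hE : E.card = n) :
    (∀ A ⊆ E, width (twist {F : Finset α | F ⊆ E ∧ Even F.card} A) = n - 1) ∧
    ∑ A ∈ E.powerset,
        (Polynomial.X : Polynomial ℤ) ^ width (twist {F : Finset α | F ⊆ E ∧ Even F.card} A)
      = Polynomial.C (2 ^ n : ℤ) * Polynomial.X ^ (n - 1) := by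
  have hw : ∀ A ⊆ E, width (twist {F : Finset α | F ⊆ E ∧ Even F.card} A) = n - 1 :=
    fun A hA => width_twist n hn hpos E hE A hA
  refine ⟨hw, ?_⟩
  have hcong : ∀ A ∈ E.powerset,
      (Polynomial.X : Polynomial ℤ) ^ width (twist {F : Finset α | F ⊆ E ∧ Even F.card} A)
        = Polynomial.X ^ (n - 1) := fun A hA => by
    rw [hw A (Finset.mem_powerset.mp hA)]
  rw [Finset.sum_congr rfl hcong, Finset.sum_const, Finset.card_powerset, hE,
    nsmul_eq_mul]
  have h2 : (Polynomial.C 2 : Polynomial ℤ) = 2 := by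
    simp [Polynomial.C_eq_natCast]
  rw [mul_comm, map_pow, h2]
  push_cast
  ring
end

section
/- Let D = (E, 𝓕) be an even delta-matroid with ∅ ∈ 𝓕 such that w(D ⋆ A) = w(D) for every A ⊆ E. Then there is no element x ∈ E that belongs to every feasible set of maximum cardinality of D. -/
open Finset
open scoped symmDiff

/-- if `D` is an even delta-matroid with `∅` feasible and all twists have
the same width as `D`, then no element of `E` lies in every maximum-cardinality feasible
set. -/
theorem no_element_in_all_max {α : Type*} [DecidableEq α] (E : Finset α)
    (𝓕 : Set (Finset α)) (hD : IsDeltaMatroid E 𝓕) (hEv : IsEvenSys 𝓕)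
    (hempty : ∅ ∈ 𝓕) (hw : ∀ A ⊆ E, width (twist 𝓕 A) = width 𝓕) :
    ¬ ∃ x ∈ E, ∀ F ∈ 𝓕, (∀ G ∈ 𝓕, G.card ≤ F.card) → x ∈ F := by
  rintro ⟨x, hxE, hx⟩
  have hFeven : ∀ F ∈ 𝓕, Even F.card := by
    intro F hF
    have h := hEv F hF ∅ hempty
    have he : F ∆ (∅ : Finset α) = F := by ext a; simp [Finset.mem_symmDiff]
    rwa [he] at h
  set S := Finset.card '' 𝓕 with hS
  have hSne : S.Nonempty := ⟨_, Set.mem_image_of_mem _ hempty⟩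
  have hSbdd : BddAbove S := by
    refine ⟨E.card, ?_⟩
    rintro n ⟨F, hF, rfl⟩
    exact Finset.card_le_card (hD.2.1 F hF)
  set k := sSup S with hkdef
  have hkS : k ∈ S := Nat.sSup_mem hSne hSbdd
  obtain ⟨Fm, hFm, hFmcard⟩ := hkS
  have hle : ∀ F ∈ 𝓕, F.card ≤ k := fun F hF => le_csSup hSbdd ⟨F, hF, rfl⟩
  have hxFm : x ∈ Fm := hx Fm hFm (fun G hG => hFmcard ▸ hle G hG)
  have hk1 : 1 ≤ k := by
    have := Finset.card_pos.mpr ⟨x, hxFm⟩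
    omega
  have hkeven : Even k := hFmcard ▸ hFeven Fm hFm
  have hk2 : 2 ≤ k := by rcases hkeven with ⟨m, hm⟩; omega
  have h0S : (0 : ℕ) ∈ S := ⟨∅, hempty, by simp⟩
  have hinf : sInf S = 0 := by
    have := Nat.sInf_le h0S
    omega
  have hwD : width 𝓕 = k := by
    simp only [width, ← hS, hinf, ← hkdef, Nat.sub_zero]
  have hxsub : ({x} : Finset α) ⊆ E := Finset.singleton_subset_iff.mpr hxE
  have hwt := hw {x} hxsub
  set T := Finset.card '' twist 𝓕 {x} with hT
  have hTmem : ∀ n ∈ T, Odd n ∧ n ≤ k - 1 := by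
    rintro n ⟨G, ⟨F, hF, rfl⟩, rfl⟩
    simp only []
    have hFev := hFeven F hF
    by_cases hxF : x ∈ F
    · have heq : ({x} : Finset α) ∆ F = F.erase x := by
        ext a
        simp only [Finset.mem_symmDiff, Finset.mem_singleton, Finset.mem_erase]
        constructor
        · rintro (⟨rfl, h⟩ | ⟨h1, h2⟩)
          · exact absurd hxF h
          · exact ⟨fun h => h2 (h ▸ rfl), h1⟩
        · rintro ⟨h1, h2⟩
          exact Or.inr ⟨h2, fun h => h1 (by simpa using h)⟩
      rw [heq, Finset.card_erase_of_mem hxF]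
      have h1 : 1 ≤ F.card := Finset.card_pos.mpr ⟨x, hxF⟩
      have hlek := hle F hF
      rcases hFev with ⟨m, hm⟩
      exact ⟨⟨m - 1, by omega⟩, by omega⟩
    · have heq : ({x} : Finset α) ∆ F = insert x F := by
        ext a
        simp only [Finset.mem_symmDiff, Finset.mem_singleton, Finset.mem_insert]
        constructor
        · rintro (⟨rfl, _⟩ | ⟨h1, _⟩)
          · exact Or.inl rfl
          · exact Or.inr h1
        · rintro (rfl | h)
          · exact Or.inl ⟨rfl, hxF⟩
          · exact Or.inr ⟨h, fun hh => hxF (hh ▸ h)⟩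
      rw [heq, Finset.card_insert_of_notMem hxF]
      have hlt : F.card < k := by
        rcases lt_or_eq_of_le (hle F hF) with h | h
        · exact h
        · exact absurd (hx F hF (fun G hG => h ▸ hle G hG)) hxF
      rcases hFev with ⟨m, hm⟩
      rcases hkeven with ⟨p, hp⟩
      exact ⟨⟨m, by omega⟩, by omega⟩
  have hTne : T.Nonempty := ⟨_, ⟨_, ⟨∅, hempty, rfl⟩, rfl⟩⟩
  have hTbdd : BddAbove T := ⟨k - 1, fun n hn => (hTmem n hn).2⟩
  have hsupT : sSup T ≤ k - 1 := csSup_le hTne (fun n hn => (hTmem n hn).2)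
  have hinfT : 1 ≤ sInf T := by
    have hmem : sInf T ∈ T := Nat.sInf_mem hTne
    rcases (hTmem _ hmem).1 with ⟨m, hm⟩
    omega
  have : width (twist 𝓕 {x}) ≤ k - 2 := by
    simp only [width, ← hT]
    omega
  rw [hwt, hwD] at this
  omega
end

section
/- Let D = (E, 𝓕) be an even delta-matroid with ∅ ∈ 𝓕 such that w(D ⋆ A) = w(D) for every A ⊆ E. If a, b ∈ E are distinct and {a, b} ∈ 𝓕, then every feasible set of maximum cardinality of D contains a or contains b. -/
open Finset
open scoped symmDiff

/-- if `D` is an even delta-matroid with `∅` feasible, all twists have the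
same width as `D`, and `{a, b} ∈ 𝓕` with `a ≠ b`, then every maximum-cardinality feasible
set contains `a` or `b`. -/
theorem max_feasible_meets_pair {α : Type*} [DecidableEq α] (E : Finset α)
    (𝓕 : Set (Finset α)) (hD : IsDeltaMatroid E 𝓕) (hEv : IsEvenSys 𝓕)
    (hempty : ∅ ∈ 𝓕) (hw : ∀ A ⊆ E, width (twist 𝓕 A) = width 𝓕)
    (a b : α) (ha : a ∈ E) (hb : b ∈ E) (hab : a ≠ b)
    (hpair : ({a, b} : Finset α) ∈ 𝓕) :
    ∀ F ∈ 𝓕, (∀ G ∈ 𝓕, G.card ≤ F.card) → a ∈ F ∨ b ∈ F := by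
  intro F hF hmax
  by_contra h
  push_neg at h
  obtain ⟨haF, hbF⟩ := h
  have hFE : F ⊆ E := hD.2.1 F hF
  -- width 𝓕 = F.card
  have hub : ∀ n ∈ Finset.card '' 𝓕, n ≤ F.card := by
    rintro _ ⟨G, hG, rfl⟩; exact hmax G hG
  have hsup : sSup (Finset.card '' 𝓕) = F.card :=
    le_antisymm (csSup_le ⟨F.card, ⟨F, hF, rfl⟩⟩ hub)
      (le_csSup ⟨F.card, hub⟩ ⟨F, hF, rfl⟩)
  have hinf : sInf (Finset.card '' 𝓕) = 0 :=
    Nat.sInf_eq_zero.mpr (Or.inl ⟨∅, hempty, rfl⟩)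
  have hwF : width 𝓕 = F.card := by
    rw [width, hsup, hinf]; omega
  -- the twist by F
  have hdisj : Disjoint F ({a, b} : Finset α) := by
    simp [Finset.disjoint_insert_right, haF, hbF]
  have hcard : (F ∆ ({a, b} : Finset α)).card = F.card + 2 := by
    rw [hdisj.symmDiff_eq_sup]
    rw [Finset.sup_eq_union, Finset.card_union_of_disjoint hdisj]
    simp [Finset.card_insert_of_notMem, hab]
  have hbig : F.card + 2 ∈ Finset.card '' twist 𝓕 F :=
    ⟨F ∆ ({a, b} : Finset α), ⟨({a, b} : Finset α), hpair, rfl⟩, hcard⟩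
  have hzero : (0 : ℕ) ∈ Finset.card '' twist 𝓕 F :=
    ⟨F ∆ F, ⟨F, hF, rfl⟩, by simp⟩
  have hub' : ∀ n ∈ Finset.card '' twist 𝓕 F, n ≤ E.card := by
    rintro _ ⟨_, ⟨G, hG, rfl⟩, rfl⟩
    exact Finset.card_le_card (le_trans (symmDiff_le_sup (a := F) (b := G))
      (sup_le hFE (hD.2.1 G hG)))
  have hsup' : F.card + 2 ≤ sSup (Finset.card '' twist 𝓕 F) :=
    le_csSup ⟨E.card, hub'⟩ hbig
  have hinf' : sInf (Finset.card '' twist 𝓕 F) = 0 :=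
    Nat.sInf_eq_zero.mpr (Or.inl hzero)
  have := hw F hFE
  rw [hwF, width, hinf'] at this
  omega
end

section
/- Let D = (E, 𝓕) be a delta-matroid with ∅ ∈ 𝓕 such that w(D ⋆ A) = w(D) for every A ⊆ E. If E ∈ 𝓕, then 𝓕 is the full power set of E. -/
open Finset
open scoped symmDiff

/-- if `D` is a delta-matroid with `∅` feasible, all twists have the same
width as `D`, and `E` itself is feasible, then every subset of `E` is feasible. -/
theorem feasible_powerset {α : Type*} [DecidableEq α] (E : Finset α)
    (𝓕 : Set (Finset α)) (hD : IsDeltaMatroid E 𝓕)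
    (hempty : ∅ ∈ 𝓕) (hw : ∀ A ⊆ E, width (twist 𝓕 A) = width 𝓕)
    (hE : E ∈ 𝓕) :
    𝓕 = {F : Finset α | F ⊆ E} := by
  obtain ⟨hne, hsub, -⟩ := hD
  ext F
  simp only [Set.mem_setOf_eq]
  constructor
  · exact fun h => hsub F h
  · intro hF
    have hwE : width 𝓕 = E.card := by
      unfold width
      have h0 : (0:ℕ) ∈ Finset.card '' 𝓕 := ⟨∅, hempty, rfl⟩
      have hEc : E.card ∈ Finset.card '' 𝓕 := ⟨E, hE, rfl⟩
      have hub : ∀ n ∈ Finset.card '' 𝓕, n ≤ E.card := by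
        rintro n ⟨G, hG, rfl⟩; exact Finset.card_le_card (hsub G hG)
      have hs : sSup (Finset.card '' 𝓕) = E.card :=
        le_antisymm (csSup_le ⟨0, h0⟩ hub) (le_csSup ⟨E.card, hub⟩ hEc)
      have hi : sInf (Finset.card '' 𝓕) = 0 :=
        Nat.eq_zero_of_le_zero (csInf_le (OrderBot.bddBelow _) h0)
      rw [hs, hi]; simp
    have hwt := hw F hF
    rw [hwE] at hwt
    set S := Finset.card '' twist 𝓕 F with hS
    have hSne : S.Nonempty := ⟨(F ∆ E).card, ⟨F ∆ E, ⟨E, hE, rfl⟩, rfl⟩⟩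
    have hub : ∀ n ∈ S, n ≤ E.card := by
      rintro n ⟨G, ⟨G', hG', rfl⟩, rfl⟩
      refine Finset.card_le_card (fun x hx => ?_)
      rcases Finset.mem_symmDiff.mp hx with ⟨h,-⟩|⟨h,-⟩
      · exact hF h
      · exact hsub G' hG' h
    have hsle : sSup S ≤ E.card := csSup_le hSne hub
    have hba : BddAbove S := ⟨E.card, fun n hn => hub n hn⟩
    have hii : sInf S ≤ sSup S := csInf_le_csSup hSne (OrderBot.bddBelow S) hba
    have hi0 : sInf S = 0 := by
      unfold width at hwt
      rw [← hS] at hwt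
      omega
    have hmem := Nat.sInf_mem hSne
    rw [hi0] at hmem
    obtain ⟨G, ⟨G', hG', rfl⟩, hc⟩ := hmem
    have h1 : F ∆ G' = ∅ := Finset.card_eq_zero.mp hc
    have h2 : F = G' := by
      rw [← Finset.bot_eq_empty] at h1
      exact symmDiff_eq_bot.mp h1
    rwa [h2]
end

section
/- Let M be a matroid on a finite ground set E with base collection 𝓑. Let F ∈ 𝓑, let x, x' ∈ F be distinct, and let y, y' ∈ E ∖ F be distinct. If F Δ {x, y} ∈ 𝓑 and F Δ {x', y'} ∈ 𝓑, then either F Δ {x, y} Δ {x', y'} ∈ 𝓑, or both F Δ {x, y'} ∈ 𝓑 and F Δ {x', y} ∈ 𝓑. -/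
open scoped symmDiff

private lemma symmDiff_pair {α : Type*} (F : Set α) (x y : α) (hx : x ∈ F) (hy : y ∉ F) :
    F ∆ ({x, y} : Set α) = insert y (F \ {x}) := by
  have hxy : x ≠ y := fun h => hy (h ▸ hx)
  ext a
  simp only [Set.symmDiff_def, Set.mem_union, Set.mem_diff, Set.mem_insert_iff,
    Set.mem_singleton_iff]
  by_cases h1 : a = x <;> by_cases h2 : a = y <;> simp_all <;> tauto

private lemma set_e5 {α : Type*} (F : Set α) (x x' y y' : α) (hx : x ∈ F) (hx' : x' ∈ F)
    (hxx : x ≠ x') (hy : y ∉ F) (hy' : y' ∉ F) (hyy : y ≠ y') :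
    F ∆ ({x, y} : Set α) ∆ ({x', y'} : Set α) = insert y' (insert y (F \ {x, x'})) := by
  rw [symmDiff_pair F x y hx hy]
  have hxy' : x ≠ y' := fun h => hy' (h ▸ hx)
  have hx'y : x' ≠ y := fun h => hy (h ▸ hx')
  have hx'y' : x' ≠ y' := fun h => hy' (h ▸ hx')
  ext a
  simp only [Set.symmDiff_def, Set.mem_union, Set.mem_diff, Set.mem_insert_iff,
    Set.mem_singleton_iff]
  by_cases h1 : a = x <;> by_cases h2 : a = x' <;> by_cases h3 : a = y <;>
    by_cases h4 : a = y' <;> simp_all <;> tauto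

private lemma set_quad1 {α : Type*} (F : Set α) (x x' y y' : α) (hx' : x' ∈ F)
    (hxx : x ≠ x') (hy : y ∉ F) :
    insert y' (insert y (F \ {x}) \ {x'}) = insert y' (insert y (F \ {x, x'})) := by
  have hx'y : x' ≠ y := fun h => hy (h ▸ hx')
  ext a
  simp only [Set.mem_diff, Set.mem_insert_iff, Set.mem_singleton_iff]
  by_cases h1 : a = x <;> by_cases h2 : a = x' <;> simp_all <;> tauto

private lemma set_quad2 {α : Type*} (F : Set α) (x x' y y' : α) (hx : x ∈ F)
    (hxx : x ≠ x') (hy' : y' ∉ F) (hyy : y ≠ y') :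
    insert y (insert y' (F \ {x'}) \ {x}) = insert y' (insert y (F \ {x, x'})) := by
  have hxy' : x ≠ y' := fun h => hy' (h ▸ hx)
  ext a
  simp only [Set.mem_diff, Set.mem_insert_iff, Set.mem_singleton_iff]
  by_cases h1 : a = x <;> by_cases h2 : a = x' <;> simp_all <;> tauto

private lemma set_eA {α : Type*} (F : Set α) (x x' y : α) (hx : x ∈ F) (hx' : x' ∈ F)
    (hxx : x ≠ x') (hy : y ∉ F) :
    insert x (insert y (F \ {x}) \ {x'}) = insert y (F \ {x'}) := by
  have hxy : x ≠ y := fun h => hy (h ▸ hx)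
  have hx'y : x' ≠ y := fun h => hy (h ▸ hx')
  ext a
  simp only [Set.mem_diff, Set.mem_insert_iff, Set.mem_singleton_iff]
  by_cases h1 : a = x <;> by_cases h2 : a = x' <;> simp_all <;> tauto

set_option maxHeartbeats 1000000 in
/-- in a matroid on a finite ground set, if `F` is a base, `x, x' ∈ F`
are distinct, `y, y' ∈ E \ F` are distinct, and both `F ∆ {x, y}` and `F ∆ {x', y'}`
are bases, then either `F ∆ {x, y} ∆ {x', y'}` is a base, or both `F ∆ {x, y'}` and
`F ∆ {x', y}` are bases. -/
theorem base_exchange_pattern {α : Type*} (M : Matroid α) (hfin : M.E.Finite)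
    (F : Set α) (hF : M.IsBase F) (x x' y y' : α)
    (hx : x ∈ F) (hx' : x' ∈ F) (hxx : x ≠ x')
    (hy : y ∈ M.E \ F) (hy' : y' ∈ M.E \ F) (hyy : y ≠ y')
    (h1 : M.IsBase (F ∆ ({x, y} : Set α))) (h2 : M.IsBase (F ∆ ({x', y'} : Set α))) :
    M.IsBase (F ∆ ({x, y} : Set α) ∆ ({x', y'} : Set α)) ∨
      (M.IsBase (F ∆ ({x, y'} : Set α)) ∧ M.IsBase (F ∆ ({x', y} : Set α))) := by
  obtain ⟨hyE, hyF⟩ := hy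
  obtain ⟨hy'E, hy'F⟩ := hy'
  have hxy : x ≠ y := fun h => hyF (h ▸ hx)
  have hxy' : x ≠ y' := fun h => hy'F (h ▸ hx)
  have hx'y : x' ≠ y := fun h => hyF (h ▸ hx')
  have hx'y' : x' ≠ y' := fun h => hy'F (h ▸ hx')
  rw [set_e5 F x x' y y' hx hx' hxx hyF hy'F hyy,
    symmDiff_pair F x y' hx hy'F, symmDiff_pair F x' y hx' hyF]
  rw [symmDiff_pair F x y hx hyF] at h1
  rw [symmDiff_pair F x' y' hx' hy'F] at h2
  have hx'mem : x' ∈ insert y (F \ {x}) \ insert y' (F \ {x'}) := by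
    simp only [Set.mem_diff, Set.mem_insert_iff, Set.mem_singleton_iff]
    tauto
  obtain ⟨f, hf, hbf⟩ := h1.exchange h2 hx'mem
  have hxmem : x ∈ insert y' (F \ {x'}) \ insert y (F \ {x}) := by
    simp only [Set.mem_diff, Set.mem_insert_iff, Set.mem_singleton_iff]
    tauto
  obtain ⟨g, hg, hbg⟩ := h2.exchange h1 hxmem
  have hfcases : f = x ∨ f = y' := by
    simp only [Set.mem_diff, Set.mem_insert_iff, Set.mem_singleton_iff] at hf
    tauto
  have hgcases : g = x' ∨ g = y := by
    simp only [Set.mem_diff, Set.mem_insert_iff, Set.mem_singleton_iff] at hg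
    tauto
  rcases hfcases with hfx | hfy
  · rcases hgcases with hgx | hgy
    · right
      rw [hfx, set_eA F x x' y hx hx' hxx hyF] at hbf
      rw [hgx, set_eA F x' x y' hx' hx (Ne.symm hxx) hy'F] at hbg
      exact ⟨hbg, hbf⟩
    · left
      rw [hgy, set_quad2 F x x' y y' hx hxx hy'F hyy] at hbg
      exact hbg
  · left
    rw [hfy, set_quad1 F x x' y y' hx' hxx hyF] at hbf
    exact hbf
end

section
/- Let M be a matroid on a finite ground set E with base collection 𝓑. Let F ∈ 𝓑, let x, x' ∈ F be distinct, and let y, y' ∈ E ∖ F be distinct. If F Δ {x, y} Δ {x', y'} ∈ 𝓑, then either both F Δ {x, y} ∈ 𝓑 and F Δ {x', y'} ∈ 𝓑, or both F Δ {x, y'} ∈ 𝓑 and F Δ {x', y} ∈ 𝓑. -/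
open scoped symmDiff

lemma symmDiff_pair_eq {α : Type*} {F : Set α} {a b : α} (ha : a ∈ F) (hb : b ∉ F) :
    F ∆ ({a, b} : Set α) = insert b (F \ {a}) := by
  ext e
  by_cases h1 : e = a <;> by_cases h2 : e = b <;>
    simp_all [Set.mem_symmDiff]

section aux
variable {α : Type*} {F : Set α} {x x' y y' : α}

lemma aux_exD (hx : x ∈ F) (hx' : x' ∈ F) (hxx : x ≠ x') (hyF : y ∉ F) (hy'F : y' ∉ F)
    (hyy : y ≠ y') :
    insert x ((insert y' ((insert y (F \ {x})) \ {x'})) \ {y}) = insert y' (F \ {x'}) := by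
  ext a
  by_cases h1 : a = x <;> by_cases h2 : a = x' <;> by_cases h3 : a = y <;>
    by_cases h4 : a = y' <;> simp_all

lemma aux_ex'B (hx : x ∈ F) (hx' : x' ∈ F) (hxx : x ≠ x') (hyF : y ∉ F) (hy'F : y' ∉ F)
    (hyy : y ≠ y') :
    insert x' ((insert y' ((insert y (F \ {x})) \ {x'})) \ {y}) = insert y' (F \ {x}) := by
  ext a
  by_cases h1 : a = x <;> by_cases h2 : a = x' <;> by_cases h3 : a = y <;>
    by_cases h4 : a = y' <;> simp_all

lemma aux_exC (hx : x ∈ F) (hx' : x' ∈ F) (hxx : x ≠ x') (hyF : y ∉ F) (hy'F : y' ∉ F)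
    (hyy : y ≠ y') :
    insert x ((insert y' ((insert y (F \ {x})) \ {x'})) \ {y'}) = insert y (F \ {x'}) := by
  ext a
  by_cases h1 : a = x <;> by_cases h2 : a = x' <;> by_cases h3 : a = y <;>
    by_cases h4 : a = y' <;> simp_all

lemma aux_ex'A (hx : x ∈ F) (hx' : x' ∈ F) (hxx : x ≠ x') (hyF : y ∉ F) (hy'F : y' ∉ F)
    (hyy : y ≠ y') :
    insert x' ((insert y' ((insert y (F \ {x})) \ {x'})) \ {y'}) = insert y (F \ {x}) := by
  ext a
  by_cases h1 : a = x <;> by_cases h2 : a = x' <;> by_cases h3 : a = y <;>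
    by_cases h4 : a = y' <;> simp_all

end aux

/-- in a matroid on a finite ground set, if `F` is a base, `x, x' ∈ F`
are distinct, `y, y' ∈ E \ F` are distinct, and `F ∆ {x, y} ∆ {x', y'}` is a base, then
either both `F ∆ {x, y}` and `F ∆ {x', y'}` are bases, or both `F ∆ {x, y'}` and
`F ∆ {x', y}` are bases. -/
theorem base_double_exchange_pattern {α : Type*} (M : Matroid α) (hfin : M.E.Finite)
    (F : Set α) (hF : M.IsBase F) (x x' y y' : α)
    (hx : x ∈ F) (hx' : x' ∈ F) (hxx : x ≠ x')
    (hy : y ∈ M.E \ F) (hy' : y' ∈ M.E \ F) (hyy : y ≠ y')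
    (h : M.IsBase (F ∆ ({x, y} : Set α) ∆ ({x', y'} : Set α))) :
    (M.IsBase (F ∆ ({x, y} : Set α)) ∧ M.IsBase (F ∆ ({x', y'} : Set α))) ∨
      (M.IsBase (F ∆ ({x, y'} : Set α)) ∧ M.IsBase (F ∆ ({x', y} : Set α))) := by
  obtain ⟨-, hyF⟩ := hy
  obtain ⟨-, hy'F⟩ := hy'
  have hxy : x ≠ y := fun h' => hyF (h' ▸ hx)
  have hxy' : x ≠ y' := fun h' => hy'F (h' ▸ hx)
  have hx'y : x' ≠ y := fun h' => hyF (h' ▸ hx')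
  have hx'y' : x' ≠ y' := fun h' => hy'F (h' ▸ hx')
  have eA : F ∆ ({x, y} : Set α) = insert y (F \ {x}) := symmDiff_pair_eq hx hyF
  have eB : F ∆ ({x, y'} : Set α) = insert y' (F \ {x}) := symmDiff_pair_eq hx hy'F
  have eC : F ∆ ({x', y} : Set α) = insert y (F \ {x'}) := symmDiff_pair_eq hx' hyF
  have eD : F ∆ ({x', y'} : Set α) = insert y' (F \ {x'}) := symmDiff_pair_eq hx' hy'F
  set G : Set α := insert y' ((insert y (F \ {x})) \ {x'}) with hG
  have eG : F ∆ ({x, y} : Set α) ∆ ({x', y'} : Set α) = G := by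
    rw [eA]
    exact symmDiff_pair_eq (by simp [hx', hxx.symm]) (by simp; tauto)
  rw [eG] at h
  clear eG
  have hxG : x ∉ G := by simp [hG]; tauto
  have hx'G : x' ∉ G := by simp [hG]; tauto
  have hyG : y ∈ G := by simp [hG]; tauto
  have hy'G : y' ∈ G := by simp [hG]
  have hGF : ∀ a ∈ G, a ∉ F → a = y ∨ a = y' := by
    intro a haG haF
    simp only [hG, Set.mem_insert_iff, Set.mem_diff, Set.mem_singleton_iff] at haG
    tauto
  have hFG : ∀ a ∈ F, a ∉ G → a = x ∨ a = x' := by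
    intro a haF haG
    simp only [hG, Set.mem_insert_iff, Set.mem_diff, Set.mem_singleton_iff, not_or,
      not_and, not_not] at haG
    by_contra hc
    push_neg at hc
    exact hc.2 (haG.2 (Or.inr ⟨haF, hc.1⟩))
  have d1 : M.IsBase (insert y (F \ {x})) ∨ M.IsBase (insert y' (F \ {x})) := by
    obtain ⟨f, hf, hb⟩ := hF.exchange h ⟨hx, hxG⟩
    rcases hGF f hf.1 hf.2 with rfl | rfl
    · exact Or.inl hb
    · exact Or.inr hb
  have d2 : M.IsBase (insert y (F \ {x'})) ∨ M.IsBase (insert y' (F \ {x'})) := by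
    obtain ⟨f, hf, hb⟩ := hF.exchange h ⟨hx', hx'G⟩
    rcases hGF f hf.1 hf.2 with rfl | rfl
    · exact Or.inl hb
    · exact Or.inr hb
  have d3 : M.IsBase (insert y' (F \ {x'})) ∨ M.IsBase (insert y' (F \ {x})) := by
    obtain ⟨f, hf, hb⟩ := h.exchange hF ⟨hyG, hyF⟩
    rw [hG] at hb
    rcases hFG f hf.1 hf.2 with rfl | rfl
    · rw [aux_exD hx hx' hxx hyF hy'F hyy] at hb; exact Or.inl hb
    · rw [aux_ex'B hx hx' hxx hyF hy'F hyy] at hb; exact Or.inr hb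
  have d4 : M.IsBase (insert y (F \ {x'})) ∨ M.IsBase (insert y (F \ {x})) := by
    obtain ⟨f, hf, hb⟩ := h.exchange hF ⟨hy'G, hy'F⟩
    rw [hG] at hb
    rcases hFG f hf.1 hf.2 with rfl | rfl
    · rw [aux_exC hx hx' hxx hyF hy'F hyy] at hb; exact Or.inl hb
    · rw [aux_ex'A hx hx' hxx hyF hy'F hyy] at hb; exact Or.inr hb
  rw [eA, eB, eC, eD]
  tauto
end

section
/- Let D = (E, 𝓕) be a delta-matroid and e ∈ E. Suppose there exists A₀ such that the deletion D ∖ e or the contraction D / e is isomorphic to a twist S₄ ⋆ A₀ of S₄, or to a twist S₅ ⋆ A₀ of S₅ (isomorphism meaning a bijection of ground sets mapping the feasible sets of one set system onto those of the other). Then there exists A ⊆ E such that the twist D ⋆ A contains an S-pattern. -/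
open Finset
open scoped symmDiff

/-- Isomorphism of set systems: a bijection of ground sets mapping the feasible sets of
one set system onto those of the other. -/
def SysIso {α : Type*} {β : Type*} [DecidableEq α] [DecidableEq β]
    (E₁ : Finset α) (𝓕₁ : Set (Finset α)) (E₂ : Finset β) (𝓕₂ : Set (Finset β)) : Prop :=
  ∃ f : α → β, Set.BijOn f ↑E₁ ↑E₂ ∧
    ∀ F : Finset α, F ⊆ E₁ → (F ∈ 𝓕₁ ↔ F.image f ∈ 𝓕₂)

/-- The feasible sets of the delta-matroid `S₄`. -/
def S4F : Set (Finset ℕ) := {∅, {1, 2}, {1, 3}, {1, 4}, {2, 3}, {2, 4}, {3, 4}}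

/-- The feasible sets of the delta-matroid `S₅`. -/
def S5F : Set (Finset ℕ) := {∅, {1, 2}, {1, 4}, {2, 3}, {3, 4}, {1, 2, 3, 4}}


lemma mem_twist' {𝓖 : Set (Finset ℕ)} {A G P : Finset ℕ} (hG : G ∈ 𝓖) (h : A ∆ G = P) :
    P ∈ twist 𝓖 A := ⟨G, hG, h⟩

lemma image_symmDiff_injOn {α : Type*} [DecidableEq α] {g : ℕ → α} {s : Finset ℕ}
    (hg : Set.InjOn g ↑s) {A B : Finset ℕ} (hA : A ⊆ s) (hB : B ⊆ s) :
    (A ∆ B).image g = A.image g ∆ B.image g := by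
  ext a
  simp only [Finset.mem_image, Finset.mem_symmDiff]
  constructor
  · rintro ⟨x, hx, rfl⟩
    rcases hx with ⟨hxA, hxB⟩ | ⟨hxB, hxA⟩
    · exact Or.inl ⟨⟨x, hxA, rfl⟩, fun ⟨y, hyB, hy⟩ =>
        hxB (hg (Finset.mem_coe.2 (hB hyB)) (Finset.mem_coe.2 (hA hxA)) hy ▸ hyB)⟩
    · exact Or.inr ⟨⟨x, hxB, rfl⟩, fun ⟨y, hyA, hy⟩ =>
        hxA (hg (Finset.mem_coe.2 (hA hyA)) (Finset.mem_coe.2 (hB hxB)) hy ▸ hyA)⟩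
  · rintro (⟨⟨x, hxA, rfl⟩, hn⟩ | ⟨⟨x, hxB, rfl⟩, hn⟩)
    · exact ⟨x, Or.inl ⟨hxA, fun hxB => hn ⟨x, hxB, rfl⟩⟩, rfl⟩
    · exact ⟨x, Or.inr ⟨hxB, fun hxA => hn ⟨x, hxA, rfl⟩⟩, rfl⟩

lemma union_symmDiff_union' {α : Type*} [DecidableEq α] {e : α} {s X F : Finset α}
    (hs : s ⊆ {e}) (hX : e ∉ X) (hF : e ∉ F) : (X ∪ s) ∆ (F ∪ s) = X ∆ F := by
  rcases Finset.subset_singleton_iff.mp hs with rfl | rfl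
  · simp
  · ext a
    by_cases ha : a = e
    · subst ha
      simp [Finset.mem_symmDiff, hX, hF]
    · simp only [Finset.mem_symmDiff, Finset.mem_union, Finset.mem_singleton, ha, or_false]

set_option maxHeartbeats 2000000 in
lemma pull_pattern {α : Type*} [DecidableEq α] (E : Finset α) (𝓕 : Set (Finset α))
    (e : α) (he : e ∈ E) (𝓜 : Set (Finset α)) (SF : Set (Finset ℕ))
    (A₀ B F₀ : Finset ℕ) (x₁ x₂ y₁ y₂ : ℕ) (s : Finset α)
    (hSF : ∀ G ∈ SF, G ⊆ ({1,2,3,4} : Finset ℕ))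
    (hA₀ : A₀ ⊆ ({1,2,3,4} : Finset ℕ)) (hB : B ⊆ ({1,2,3,4} : Finset ℕ))
    (hF₀ : F₀ ⊆ ({1,2,3,4} : Finset ℕ))
    (hx₁ : x₁ ∈ F₀) (hx₂ : x₂ ∈ F₀) (hxne : x₁ ≠ x₂)
    (hy₁ : y₁ ∈ ({1,2,3,4} : Finset ℕ) \ F₀) (hy₂ : y₂ ∈ ({1,2,3,4} : Finset ℕ) \ F₀)
    (hyne : y₁ ≠ y₂)
    (hp0 : F₀ ∈ twist SF B)
    (hp1 : F₀ ∆ ({x₁, y₁} : Finset ℕ) ∈ twist SF B)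
    (hp2 : F₀ ∆ ({x₂, y₂} : Finset ℕ) ∈ twist SF B)
    (hp3 : F₀ ∆ ({x₁, y₂} : Finset ℕ) ∈ twist SF B)
    (hp4 : F₀ ∆ ({x₂, y₁} : Finset ℕ) ∈ twist SF B)
    (hp5 : F₀ ∆ ({x₁, y₁} : Finset ℕ) ∆ ({x₂, y₂} : Finset ℕ) ∈ twist SF B)
    (hiso : SysIso (E.erase e) 𝓜 ({1,2,3,4} : Finset ℕ) (twist SF A₀))
    (hs : s ⊆ {e})
    (hlift : ∀ F, F ⊆ E.erase e → F ∈ 𝓜 → F ∪ s ∈ 𝓕) :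
    ∃ A ⊆ E, ∃ F x₁ x₂ y₁ y₂, SPatternAt E (twist 𝓕 A) F x₁ x₂ y₁ y₂ := by
  obtain ⟨f, hf, hmem⟩ := hiso
  haveI : Nonempty α := ⟨e⟩
  set g : ℕ → α := Function.invFunOn f ↑(E.erase e) with hgdef
  have hgE : ∀ y ∈ ({1,2,3,4} : Finset ℕ), g y ∈ E.erase e := by
    intro y hy
    obtain ⟨x, hx, hfx⟩ := hf.surjOn hy
    exact Function.invFunOn_mem ⟨x, hx, hfx⟩
  have hfg : ∀ y ∈ ({1,2,3,4} : Finset ℕ), f (g y) = y := by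
    intro y hy
    obtain ⟨x, hx, hfx⟩ := hf.surjOn hy
    exact Function.invFunOn_eq ⟨x, hx, hfx⟩
  have hginj : Set.InjOn g ↑({1,2,3,4} : Finset ℕ) := by
    intro a ha b hb hab
    have h1 := hfg a ha
    have h2 := hfg b hb
    rw [← h1, ← h2, hab]
  have himg_sub : ∀ Q : Finset ℕ, Q ⊆ ({1,2,3,4} : Finset ℕ) → Q.image g ⊆ E.erase e := by
    intro Q hQ a ha
    obtain ⟨x, hx, rfl⟩ := Finset.mem_image.mp ha
    exact hgE x (hQ hx)
  have hfimg : ∀ Q : Finset ℕ, Q ⊆ ({1,2,3,4} : Finset ℕ) → (Q.image g).image f = Q := by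
    intro Q hQ
    rw [Finset.image_image]
    have h1 : Q.image (f ∘ g) = Q.image id := Finset.image_congr (fun x hx => hfg x (hQ hx))
    simpa using h1
  have hsdN : ∀ {P Q : Finset ℕ}, P ⊆ ({1,2,3,4} : Finset ℕ) → Q ⊆ ({1,2,3,4} : Finset ℕ) →
      P ∆ Q ⊆ ({1,2,3,4} : Finset ℕ) := by
    intro P Q hP hQ x hx
    rcases Finset.mem_symmDiff.mp hx with ⟨h1, _⟩ | ⟨h1, _⟩
    · exact hP h1
    · exact hQ h1
  have hAB : A₀ ∆ B ⊆ ({1,2,3,4} : Finset ℕ) := hsdN hA₀ hB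
  set X : Finset α := (A₀ ∆ B).image g with hXdef
  have heX : e ∉ X := fun h => (Finset.mem_erase.mp (himg_sub _ hAB h)).1 rfl
  set A : Finset α := X ∪ s with hAdef
  have hAE : A ⊆ E :=
    Finset.union_subset ((himg_sub _ hAB).trans (Finset.erase_subset _ _))
      (hs.trans (Finset.singleton_subset_iff.mpr he))
  have key : ∀ P : Finset ℕ, P ⊆ ({1,2,3,4} : Finset ℕ) → P ∈ twist SF B →
      P.image g ∈ twist 𝓕 A := by
    intro P hP hPm
    obtain ⟨G, hG, hGP⟩ := hPm
    have hGN : G ⊆ ({1,2,3,4} : Finset ℕ) := hSF G hG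
    have hQN : A₀ ∆ G ⊆ ({1,2,3,4} : Finset ℕ) := hsdN hA₀ hGN
    have hFQsub : (A₀ ∆ G).image g ⊆ E.erase e := himg_sub _ hQN
    have hFQ : (A₀ ∆ G).image g ∈ 𝓜 := by
      rw [hmem _ hFQsub, hfimg _ hQN]
      exact ⟨G, hG, rfl⟩
    have hfeas : (A₀ ∆ G).image g ∪ s ∈ 𝓕 := hlift _ hFQsub hFQ
    refine ⟨(A₀ ∆ G).image g ∪ s, hfeas, ?_⟩
    show A ∆ ((A₀ ∆ G).image g ∪ s) = P.image g
    have h1 : X ∆ (A₀ ∆ G).image g = P.image g := by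
      rw [hXdef, ← image_symmDiff_injOn hginj hAB hQN]
      congr 1
      rw [← hGP]
      ext a
      simp only [Finset.mem_symmDiff]
      tauto
    calc A ∆ ((A₀ ∆ G).image g ∪ s) = X ∆ (A₀ ∆ G).image g :=
          union_symmDiff_union' hs heX (fun h => (Finset.mem_erase.mp (hFQsub h)).1 rfl)
      _ = P.image g := h1
  have hx₁N : x₁ ∈ ({1,2,3,4} : Finset ℕ) := hF₀ hx₁
  have hx₂N : x₂ ∈ ({1,2,3,4} : Finset ℕ) := hF₀ hx₂
  have hy₁N : y₁ ∈ ({1,2,3,4} : Finset ℕ) := (Finset.mem_sdiff.mp hy₁).1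
  have hy₂N : y₂ ∈ ({1,2,3,4} : Finset ℕ) := (Finset.mem_sdiff.mp hy₂).1
  have hy₁F : y₁ ∉ F₀ := (Finset.mem_sdiff.mp hy₁).2
  have hy₂F : y₂ ∉ F₀ := (Finset.mem_sdiff.mp hy₂).2
  have hpair : ∀ u v : ℕ, ({g u, g v} : Finset α) = ({u, v} : Finset ℕ).image g := by
    intro u v
    simp [Finset.image_insert]
  have hsubN : ∀ {u v : ℕ}, u ∈ ({1,2,3,4} : Finset ℕ) → v ∈ ({1,2,3,4} : Finset ℕ) →
      ({u, v} : Finset ℕ) ⊆ ({1,2,3,4} : Finset ℕ) := by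
    intro u v hu hv
    exact Finset.insert_subset hu (Finset.singleton_subset_iff.mpr hv)
  have hgy : ∀ y ∈ ({1,2,3,4} : Finset ℕ), y ∉ F₀ → g y ∈ E \ F₀.image g := by
    intro y hyN hyF
    rw [Finset.mem_sdiff]
    refine ⟨Finset.erase_subset _ _ (hgE y hyN), ?_⟩
    rintro hmem'
    obtain ⟨x, hxF, hgx⟩ := Finset.mem_image.mp hmem'
    exact hyF (hginj (Finset.mem_coe.2 (hF₀ hxF)) (Finset.mem_coe.2 hyN) hgx ▸ hxF)
  have e1 : F₀.image g ∆ ({g x₁, g y₁} : Finset α) = (F₀ ∆ {x₁, y₁}).image g := by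
    rw [hpair, ← image_symmDiff_injOn hginj hF₀ (hsubN hx₁N hy₁N)]
  have e2 : F₀.image g ∆ ({g x₂, g y₂} : Finset α) = (F₀ ∆ {x₂, y₂}).image g := by
    rw [hpair, ← image_symmDiff_injOn hginj hF₀ (hsubN hx₂N hy₂N)]
  have e3 : F₀.image g ∆ ({g x₁, g y₂} : Finset α) = (F₀ ∆ {x₁, y₂}).image g := by
    rw [hpair, ← image_symmDiff_injOn hginj hF₀ (hsubN hx₁N hy₂N)]
  have e4 : F₀.image g ∆ ({g x₂, g y₁} : Finset α) = (F₀ ∆ {x₂, y₁}).image g := by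
    rw [hpair, ← image_symmDiff_injOn hginj hF₀ (hsubN hx₂N hy₁N)]
  have e5 : F₀.image g ∆ ({g x₁, g y₁} : Finset α) ∆ ({g x₂, g y₂} : Finset α)
      = (F₀ ∆ {x₁, y₁} ∆ {x₂, y₂}).image g := by
    rw [e1, hpair, ← image_symmDiff_injOn hginj (hsdN hF₀ (hsubN hx₁N hy₁N)) (hsubN hx₂N hy₂N)]
  refine ⟨A, hAE, F₀.image g, g x₁, g x₂, g y₁, g y₂,
    key F₀ hF₀ hp0,
    Finset.mem_image_of_mem g hx₁,
    Finset.mem_image_of_mem g hx₂,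
    fun h => hxne (hginj (Finset.mem_coe.2 hx₁N) (Finset.mem_coe.2 hx₂N) h),
    hgy y₁ hy₁N hy₁F, hgy y₂ hy₂N hy₂F,
    fun h => hyne (hginj (Finset.mem_coe.2 hy₁N) (Finset.mem_coe.2 hy₂N) h),
    ?_, ?_, ?_, ?_, ?_⟩
  · rw [e1]; exact key _ (hsdN hF₀ (hsubN hx₁N hy₁N)) hp1
  · rw [e2]; exact key _ (hsdN hF₀ (hsubN hx₂N hy₂N)) hp2
  · rw [e3]; exact key _ (hsdN hF₀ (hsubN hx₁N hy₂N)) hp3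
  · rw [e4]; exact key _ (hsdN hF₀ (hsubN hx₂N hy₁N)) hp4
  · rw [e5]
    exact key _ (hsdN (hsdN hF₀ (hsubN hx₁N hy₁N)) (hsubN hx₂N hy₂N)) hp5

/-- if some elementary minor `D ∖ e` or `D / e` of a delta-matroid `D` is
isomorphic to a twist of `S₄` or of `S₅`, then some twist `D ⋆ A` contains an S-pattern. -/
theorem sPattern_of_minor_iso_twist {α : Type*} [DecidableEq α] (E : Finset α)
    (𝓕 : Set (Finset α)) (hD : IsDeltaMatroid E 𝓕) (e : α) (he : e ∈ E)
    (h : ∃ A₀ : Finset ℕ, A₀ ⊆ ({1, 2, 3, 4} : Finset ℕ) ∧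
      (SysIso (E.erase e) (deleteSys 𝓕 e) ({1, 2, 3, 4} : Finset ℕ) (twist S4F A₀) ∨
       SysIso (E.erase e) (deleteSys 𝓕 e) ({1, 2, 3, 4} : Finset ℕ) (twist S5F A₀) ∨
       SysIso (E.erase e) (contractSys E 𝓕 e) ({1, 2, 3, 4} : Finset ℕ) (twist S4F A₀) ∨
       SysIso (E.erase e) (contractSys E 𝓕 e) ({1, 2, 3, 4} : Finset ℕ) (twist S5F A₀))) :
    ∃ A ⊆ E, ∃ F x₁ x₂ y₁ y₂, SPatternAt E (twist 𝓕 A) F x₁ x₂ y₁ y₂ := by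
  obtain ⟨A₀, hA₀, hcase⟩ := h
  have hS4 : ∀ G ∈ S4F, G ⊆ ({1,2,3,4} : Finset ℕ) := by
    intro G hG
    simp only [S4F, Set.mem_insert_iff, Set.mem_singleton_iff] at hG
    rcases hG with rfl | rfl | rfl | rfl | rfl | rfl | rfl <;> decide
  have hS5 : ∀ G ∈ S5F, G ⊆ ({1,2,3,4} : Finset ℕ) := by
    intro G hG
    simp only [S5F, Set.mem_insert_iff, Set.mem_singleton_iff] at hG
    rcases hG with rfl | rfl | rfl | rfl | rfl | rfl <;> decide
  have m4 : ∀ G : Finset ℕ, G = ∅ ∨ G = {1,2} ∨ G = {1,3} ∨ G = {1,4} ∨ G = {2,3} ∨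
      G = {2,4} ∨ G = {3,4} → G ∈ S4F := by
    intro G hG
    simp only [S4F, Set.mem_insert_iff, Set.mem_singleton_iff]
    exact hG
  have m5 : ∀ G : Finset ℕ, G = ∅ ∨ G = {1,2} ∨ G = {1,4} ∨ G = {2,3} ∨ G = {3,4} ∨
      G = {1,2,3,4} → G ∈ S5F := by
    intro G hG
    simp only [S5F, Set.mem_insert_iff, Set.mem_singleton_iff]
    exact hG
  have hdel : ∀ F, F ⊆ E.erase e → F ∈ deleteSys 𝓕 e → F ∪ ∅ ∈ 𝓕 := by
    intro F _ hF
    simpa using hF.1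
  have hcon : ∀ F, F ⊆ E.erase e → F ∈ contractSys E 𝓕 e → F ∪ {e} ∈ 𝓕 := by
    intro F _ hF
    exact hF.2
  rcases hcase with hiso | hiso | hiso | hiso
  · exact pull_pattern E 𝓕 e he _ S4F A₀ ∅ {1,2} 1 2 3 4 ∅ hS4 hA₀ (by decide) (by decide)
      (by decide) (by decide) (by decide) (by decide) (by decide) (by decide)
      (mem_twist' (m4 {1,2} (by decide)) (by decide))
      (mem_twist' (m4 {2,3} (by decide)) (by decide))
      (mem_twist' (m4 {1,4} (by decide)) (by decide))
      (mem_twist' (m4 {2,4} (by decide)) (by decide))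
      (mem_twist' (m4 {1,3} (by decide)) (by decide))
      (mem_twist' (m4 {3,4} (by decide)) (by decide))
      hiso (Finset.empty_subset _) hdel
  · exact pull_pattern E 𝓕 e he _ S5F A₀ {1,3} {3,4} 3 4 1 2 ∅ hS5 hA₀ (by decide) (by decide)
      (by decide) (by decide) (by decide) (by decide) (by decide) (by decide)
      (mem_twist' (m5 {1,4} (by decide)) (by decide))
      (mem_twist' (m5 {3,4} (by decide)) (by decide))
      (mem_twist' (m5 {1,2} (by decide)) (by decide))
      (mem_twist' (m5 {1,2,3,4} (by decide)) (by decide))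
      (mem_twist' (m5 ∅ (by decide)) (by decide))
      (mem_twist' (m5 {2,3} (by decide)) (by decide))
      hiso (Finset.empty_subset _) hdel
  · exact pull_pattern E 𝓕 e he _ S4F A₀ ∅ {1,2} 1 2 3 4 {e} hS4 hA₀ (by decide) (by decide)
      (by decide) (by decide) (by decide) (by decide) (by decide) (by decide)
      (mem_twist' (m4 {1,2} (by decide)) (by decide))
      (mem_twist' (m4 {2,3} (by decide)) (by decide))
      (mem_twist' (m4 {1,4} (by decide)) (by decide))
      (mem_twist' (m4 {2,4} (by decide)) (by decide))
      (mem_twist' (m4 {1,3} (by decide)) (by decide))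
      (mem_twist' (m4 {3,4} (by decide)) (by decide))
      hiso (Finset.Subset.refl _) hcon
  · exact pull_pattern E 𝓕 e he _ S5F A₀ {1,3} {3,4} 3 4 1 2 {e} hS5 hA₀ (by decide) (by decide)
      (by decide) (by decide) (by decide) (by decide) (by decide) (by decide)
      (mem_twist' (m5 {1,4} (by decide)) (by decide))
      (mem_twist' (m5 {3,4} (by decide)) (by decide))
      (mem_twist' (m5 {1,2} (by decide)) (by decide))
      (mem_twist' (m5 {1,2,3,4} (by decide)) (by decide))
      (mem_twist' (m5 ∅ (by decide)) (by decide))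
      (mem_twist' (m5 {2,3} (by decide)) (by decide))
      hiso (Finset.Subset.refl _) hcon
end

section
/- Let D = (E, 𝓕) be an even delta-matroid with ∅ ∈ 𝓕, and suppose x ∈ E belongs to every feasible set of maximum cardinality of D (in particular some feasible set is nonempty). Then w(D ⋆ {x}) = w(D) − 2. -/
open Finset
open scoped symmDiff

lemma singleton_symmDiff_mem {α : Type*} [DecidableEq α] {x : α} {F : Finset α}
    (h : x ∈ F) : ({x} : Finset α) ∆ F = F.erase x := by
  ext a
  simp only [Finset.mem_symmDiff, Finset.mem_singleton, Finset.mem_erase]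
  constructor
  · rintro (⟨rfl, hn⟩ | ⟨ha, hne⟩)
    · exact absurd h hn
    · exact ⟨fun he => hne (he ▸ rfl), ha⟩
  · rintro ⟨hne, ha⟩
    exact Or.inr ⟨ha, fun he => hne he⟩

lemma singleton_symmDiff_notMem {α : Type*} [DecidableEq α] {x : α} {F : Finset α}
    (h : x ∉ F) : ({x} : Finset α) ∆ F = insert x F := by
  ext a
  simp only [Finset.mem_symmDiff, Finset.mem_singleton, Finset.mem_insert]
  constructor
  · rintro (⟨rfl, _⟩ | ⟨ha, _⟩)
    · exact Or.inl rfl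
    · exact Or.inr ha
  · rintro (rfl | ha)
    · exact Or.inl ⟨rfl, h⟩
    · exact Or.inr ⟨ha, fun he => h (he ▸ ha)⟩

/-- if `D` is an even delta-matroid with `∅` feasible and `x ∈ E` belongs
to every maximum-cardinality feasible set, then `w(D ⋆ {x}) = w(D) - 2`. -/
theorem width_twist_singleton {α : Type*} [DecidableEq α] (E : Finset α)
    (𝓕 : Set (Finset α)) (hD : IsDeltaMatroid E 𝓕) (hEv : IsEvenSys 𝓕)
    (hempty : ∅ ∈ 𝓕) (x : α) (hx : x ∈ E)
    (hmax : ∀ F ∈ 𝓕, (∀ G ∈ 𝓕, G.card ≤ F.card) → x ∈ F) :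
    width (twist 𝓕 {x}) = width 𝓕 - 2 := by
  classical
  obtain ⟨hne, hsub, _⟩ := hD
  -- every feasible set has even cardinality
  have heven : ∀ F ∈ 𝓕, Even F.card := by
    intro F hF
    have h := hEv F hF ∅ hempty
    have he : F ∆ (∅ : Finset α) = F := by
      ext a; simp [Finset.mem_symmDiff]
    rwa [he] at h
  set S : Set ℕ := Finset.card '' 𝓕 with hS
  have hSne : S.Nonempty := hne.image _
  have hSbdd : BddAbove S := by
    refine ⟨E.card, ?_⟩
    rintro n ⟨F, hF, rfl⟩
    exact Finset.card_le_card (hsub F hF)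
  set M : ℕ := sSup S with hM
  have hMmem : M ∈ S := Nat.sSup_mem hSne hSbdd
  obtain ⟨F₀, hF₀, hF₀card⟩ := hMmem
  have hub : ∀ G ∈ 𝓕, G.card ≤ M := fun G hG => le_csSup hSbdd ⟨G, hG, rfl⟩
  have hxF₀ : x ∈ F₀ := hmax F₀ hF₀ (fun G hG => hF₀card ▸ hub G hG)
  have hMeven : Even M := hF₀card ▸ heven F₀ hF₀
  have hM2 : 2 ≤ M := by
    have h1 : 1 ≤ F₀.card := Finset.card_pos.mpr ⟨x, hxF₀⟩
    obtain ⟨k, hk⟩ := hMeven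
    omega
  -- sInf S = 0
  have hSinf : sInf S = 0 :=
    Nat.le_zero.mp (Nat.sInf_le ⟨∅, hempty, by simp⟩)
  -- the twisted card set
  set T : Set ℕ := Finset.card '' twist 𝓕 {x} with hT
  have hTmem : ∀ n ∈ T, (n = 1 ∨ ∃ F ∈ 𝓕, (x ∈ F ∧ n = F.card - 1) ∨ (x ∉ F ∧ n = F.card + 1)) := by
    rintro n ⟨G, ⟨F, hF, rfl⟩, rfl⟩
    by_cases hxF : x ∈ F
    · exact Or.inr ⟨F, hF, Or.inl ⟨hxF, by
        simp only [singleton_symmDiff_mem hxF, Finset.card_erase_of_mem hxF]⟩⟩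
    · exact Or.inr ⟨F, hF, Or.inr ⟨hxF, by
        simp only [singleton_symmDiff_notMem hxF, Finset.card_insert_of_notMem hxF]⟩⟩
  have h1T : (1 : ℕ) ∈ T := by
    refine ⟨{x} ∆ ∅, ⟨∅, hempty, rfl⟩, ?_⟩
    rw [singleton_symmDiff_notMem (Finset.notMem_empty x)]
    simp
  have hMT : M - 1 ∈ T := by
    refine ⟨{x} ∆ F₀, ⟨F₀, hF₀, rfl⟩, ?_⟩
    rw [singleton_symmDiff_mem hxF₀, Finset.card_erase_of_mem hxF₀, hF₀card]
  have hTub : ∀ n ∈ T, n ≤ M - 1 := by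
    intro n hn
    rcases hTmem n hn with rfl | ⟨F, hF, ⟨hxF, rfl⟩ | ⟨hxF, rfl⟩⟩
    · omega
    · have := hub F hF; omega
    · have hle := hub F hF
      have hFne : F.card ≠ M := by
        intro h
        exact hxF (hmax F hF (fun G hG => h ▸ hub G hG))
      obtain ⟨k, hk⟩ := heven F hF
      obtain ⟨m, hm⟩ := hMeven
      omega
  have hTlb : ∀ n ∈ T, 1 ≤ n := by
    intro n hn
    rcases hTmem n hn with rfl | ⟨F, hF, ⟨hxF, rfl⟩ | ⟨hxF, rfl⟩⟩
    · omega
    · have h2 : 2 ≤ F.card := by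
        have h1 : 1 ≤ F.card := Finset.card_pos.mpr ⟨x, hxF⟩
        obtain ⟨k, hk⟩ := heven F hF
        omega
      omega
    · omega
  have hTsup : sSup T = M - 1 :=
    le_antisymm (csSup_le ⟨1, h1T⟩ hTub) (le_csSup ⟨M - 1, hTub⟩ hMT)
  have hTinf : sInf T = 1 :=
    le_antisymm (Nat.sInf_le h1T) (le_csInf ⟨1, h1T⟩ hTlb)
  rw [width, width, ← hT, ← hS, hTsup, hTinf, hSinf, ← hM]
  omega
end
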